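/- Let d ≥ 2, let {𝒫^(b)}_{b=1}^{d+1} be a set of d+1 mutually unbiased measurements on ℂ^d with efficiency parameter κ, and let ρ be a density operator on ℂ^d. Then (1/(d+1)) Σ_{b=1}^{d+1} (max_{1≤n≤d} p_n^(b)) ≤ g_d(C(κ,ρ)/(d+1)), where g_d(x) = (1 + √(d−1)·√(dx−1))/d and C(κ,ρ) = Σ_{b=1}^{d+1} Σ_{n=1}^{d} (p_n^(b))². -/

import Mathlib

open Matrix Finset Real
open scoped ComplexOrder

theorem stmt13 (d : ℕ) (hd : 2 ≤ d) (κ : ℝ)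
    (hκ1 : 1 / (d : ℝ) < κ) (hκ2 : κ ≤ 1)
    (P : Fin (d + 1) → Fin d → Matrix (Fin d) (Fin d) ℂ)
    (hpsd : ∀ b n, (P b n).PosSemidef)
    (hsum : ∀ b, ∑ n, P b n = 1)
    (htr1 : ∀ b n, (P b n).trace = 1)
    (htr2 : ∀ b b', b ≠ b' → ∀ n n', (P b n * P b' n').trace = ((1 / (d : ℝ) : ℝ) : ℂ))
    (htr3 : ∀ b n n', (P b n * P b n').trace =
      if n = n' then ((κ : ℝ) : ℂ) else (((1 - κ) / ((d : ℝ) - 1) : ℝ) : ℂ))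
    (ρ : Matrix (Fin d) (Fin d) ℂ) (hρ : ρ.PosSemidef) (hρtr : ρ.trace = 1)
    (p : Fin (d + 1) → Fin d → ℝ)
    (hp : ∀ b n, ((p b n : ℝ) : ℂ) = (P b n * ρ).trace) :
    (1 / ((d : ℝ) + 1)) * (∑ b, ⨆ n, p b n) ≤
      ((1 + Real.sqrt ((d : ℝ) - 1) * Real.sqrt ((d : ℝ) * ((∑ b, ∑ n, (p b n) ^ 2) / ((d : ℝ) + 1)) - 1)) / (d : ℝ)) := by
  haveI : Nonempty (Fin d) := ⟨⟨0, by omega⟩⟩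
  have hd0 : (0 : ℝ) < d := by positivity
  have hd1 : (1 : ℝ) ≤ (d : ℝ) := by exact_mod_cast Nat.one_le_of_lt hd
  have hdp1 : (0 : ℝ) < (d : ℝ) + 1 := by positivity
  -- each row of p sums to 1
  have hsum1 : ∀ b, ∑ n, p b n = 1 := by
    intro b
    have h1 : ((∑ n, p b n : ℝ) : ℂ) = 1 := by
      push_cast
      simp_rw [hp]
      rw [← Matrix.trace_sum, ← Finset.sum_mul, hsum b, one_mul, hρtr]
    exact_mod_cast h1
  set q : Fin (d + 1) → Fin d → ℝ := fun b n => p b n - 1 / d with hqdef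
  have hq0 : ∀ b, ∑ n, q b n = 0 := by
    intro b
    simp only [hqdef, Finset.sum_sub_distrib, hsum1 b, Finset.sum_const,
      Finset.card_univ, Fintype.card_fin, nsmul_eq_mul]
    field_simp
    ring
  have hqsq : ∀ b, ∑ n, (q b n) ^ 2 = (∑ n, (p b n) ^ 2) - 1 / d := by
    intro b
    have : ∀ n, (q b n) ^ 2 = (p b n) ^ 2 - (2 / d) * p b n + 1 / d ^ 2 := by
      intro n; simp only [hqdef]; field_simp; ring
    simp_rw [this, Finset.sum_add_distrib, Finset.sum_sub_distrib, ← Finset.mul_sum,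
      hsum1 b, Finset.sum_const, Finset.card_univ, Fintype.card_fin, nsmul_eq_mul]
    field_simp
    ring
  -- key pointwise bound: q² ≤ (d-1)/d * Σ q²
  have key : ∀ b n, (q b n) ^ 2 ≤ (((d : ℝ) - 1) / d) * ∑ k, (q b k) ^ 2 := by
    intro b n
    have herase : ∑ k ∈ Finset.univ.erase n, q b k = - q b n := by
      rw [Finset.sum_erase_eq_sub (Finset.mem_univ n), hq0 b]
      ring
    have hcs : (∑ k ∈ Finset.univ.erase n, q b k) ^ 2 ≤
        ((Finset.univ.erase n).card : ℝ) * ∑ k ∈ Finset.univ.erase n, (q b k) ^ 2 :=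
      sq_sum_le_card_mul_sum_sq
    have hcard : ((Finset.univ.erase n).card : ℝ) = (d : ℝ) - 1 := by
      rw [Finset.card_erase_of_mem (Finset.mem_univ n), Finset.card_univ, Fintype.card_fin]
      have : 1 ≤ d := by omega
      push_cast [this]
      ring
    rw [herase, hcard] at hcs
    have hsplit : ∑ k ∈ Finset.univ.erase n, (q b k) ^ 2 = (∑ k, (q b k) ^ 2) - (q b n) ^ 2 :=
      Finset.sum_erase_eq_sub (Finset.mem_univ n)
    rw [hsplit, neg_sq] at hcs
    have hdne : (d : ℝ) ≠ 0 := ne_of_gt hd0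
    rw [div_mul_eq_mul_div, le_div_iff₀ hd0]
    nlinarith [hcs]
  set S : ℝ := ∑ b, ∑ n, (p b n) ^ 2 with hSdef
  set s : Fin (d + 1) → ℝ := fun b => Real.sqrt ((((d : ℝ) - 1) / d) * ∑ k, (q b k) ^ 2)
    with hsdef
  have hs_nonneg : ∀ b, 0 ≤ s b := fun b => Real.sqrt_nonneg _
  have hqsum_nonneg : ∀ b, 0 ≤ ∑ k, (q b k) ^ 2 := fun b =>
    Finset.sum_nonneg fun k _ => sq_nonneg _
  have hcoef_nonneg : (0 : ℝ) ≤ ((d : ℝ) - 1) / d := by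
    apply div_nonneg <;> linarith
  have hs_sq : ∀ b, (s b) ^ 2 = (((d : ℝ) - 1) / d) * ∑ k, (q b k) ^ 2 := by
    intro b
    exact Real.sq_sqrt (mul_nonneg hcoef_nonneg (hqsum_nonneg b))
  -- bound each sup
  have hsup : ∀ b, (⨆ n, p b n) ≤ 1 / d + s b := by
    intro b
    apply ciSup_le
    intro n
    have h1 : (q b n) ≤ s b := by
      have := key b n
      calc q b n ≤ |q b n| := le_abs_self _
        _ = Real.sqrt ((q b n) ^ 2) := (Real.sqrt_sq_eq_abs _).symm
        _ ≤ s b := Real.sqrt_le_sqrt this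
    simp only [hqdef] at h1
    linarith
  -- Cauchy–Schwarz over bases
  have hcs2 : (∑ b, s b) ≤ Real.sqrt (((d : ℝ) + 1) * ∑ b, (s b) ^ 2) := by
    have h1 : (∑ b, s b) ^ 2 ≤ ((Finset.univ : Finset (Fin (d + 1))).card : ℝ) * ∑ b, (s b) ^ 2 :=
      sq_sum_le_card_mul_sum_sq
    have hcard : ((Finset.univ : Finset (Fin (d + 1))).card : ℝ) = (d : ℝ) + 1 := by
      rw [Finset.card_univ, Fintype.card_fin]; push_cast; ring
    rw [hcard] at h1
    calc ∑ b, s b = Real.sqrt ((∑ b, s b) ^ 2) := by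
          rw [Real.sqrt_sq (Finset.sum_nonneg fun b _ => hs_nonneg b)]
      _ ≤ _ := Real.sqrt_le_sqrt h1
  have hssq_sum : ∑ b, (s b) ^ 2 = (((d : ℝ) - 1) / d) * (S - ((d : ℝ) + 1) / d) := by
    simp_rw [hs_sq, hqsq, ← Finset.mul_sum, Finset.sum_sub_distrib, Finset.sum_const,
      Finset.card_univ, Fintype.card_fin, nsmul_eq_mul, hSdef]
    push_cast
    ring
  -- the RHS argument is what we get
  have hA : (0 : ℝ) ≤ (d : ℝ) * (S / ((d : ℝ) + 1)) - 1 := by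
    have h1 : ∀ b, (1 : ℝ) / d ≤ ∑ n, (p b n) ^ 2 := by
      intro b
      have := sq_sum_le_card_mul_sum_sq (s := (Finset.univ : Finset (Fin d))) (f := p b)
      rw [hsum1 b, Finset.card_univ, Fintype.card_fin] at this
      rw [div_le_iff₀ hd0]
      nlinarith [this]
    have h2 : ((d : ℝ) + 1) / d ≤ S := by
      rw [hSdef]
      calc ((d : ℝ) + 1) / d = ∑ _b : Fin (d + 1), (1 : ℝ) / d := by
            rw [Finset.sum_const, Finset.card_univ, Fintype.card_fin]
            push_cast; ring
        _ ≤ _ := Finset.sum_le_sum fun b _ => h1 b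
    have h2' : (d : ℝ) + 1 ≤ (d : ℝ) * S := by
      rw [div_le_iff₀ hd0] at h2; linarith
    rw [sub_nonneg, ← mul_div_assoc, le_div_iff₀ hdp1]
    linarith
  -- combine everything
  have hmain : (1 / ((d : ℝ) + 1)) * (∑ b, ⨆ n, p b n) ≤
      1 / d + Real.sqrt ((((d : ℝ) - 1) / d) * (S / ((d : ℝ) + 1) - 1 / d)) := by
    have h1 : (∑ b, ⨆ n, p b n) ≤ ∑ b, (1 / (d : ℝ) + s b) :=
      Finset.sum_le_sum fun b _ => hsup b
    have h2 : ∑ b, (1 / (d : ℝ) + s b) = ((d : ℝ) + 1) / d + ∑ b, s b := by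
      rw [Finset.sum_add_distrib, Finset.sum_const, Finset.card_univ, Fintype.card_fin,
        nsmul_eq_mul]
      push_cast; ring
    have h3 : Real.sqrt (((d : ℝ) + 1) * ∑ b, (s b) ^ 2) =
        ((d : ℝ) + 1) * Real.sqrt ((((d : ℝ) - 1) / d) * (S / ((d : ℝ) + 1) - 1 / d)) := by
      rw [hssq_sum]
      have harg : ((d : ℝ) + 1) * ((((d : ℝ) - 1) / d) * (S - ((d : ℝ) + 1) / d)) =
          ((d : ℝ) + 1) ^ 2 * ((((d : ℝ) - 1) / d) * (S / ((d : ℝ) + 1) - 1 / d)) := by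
        field_simp
      rw [harg, Real.sqrt_mul (sq_nonneg _), Real.sqrt_sq (le_of_lt hdp1)]
    calc (1 / ((d : ℝ) + 1)) * (∑ b, ⨆ n, p b n)
        ≤ (1 / ((d : ℝ) + 1)) * (((d : ℝ) + 1) / d + ∑ b, s b) := by
          apply mul_le_mul_of_nonneg_left _ (by positivity)
          rw [← h2]; exact h1
      _ ≤ (1 / ((d : ℝ) + 1)) * (((d : ℝ) + 1) / d +
            ((d : ℝ) + 1) * Real.sqrt ((((d : ℝ) - 1) / d) * (S / ((d : ℝ) + 1) - 1 / d))) := by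
          apply mul_le_mul_of_nonneg_left _ (by positivity)
          have := hcs2
          rw [h3] at this
          linarith
      _ = 1 / d + Real.sqrt ((((d : ℝ) - 1) / d) * (S / ((d : ℝ) + 1) - 1 / d)) := by
          have hgen : ∀ X : ℝ, (1 / ((d : ℝ) + 1)) * (((d : ℝ) + 1) / d + ((d : ℝ) + 1) * X) =
              1 / d + X := by
            intro X; field_simp
          exact hgen _
  -- rewrite the sqrt term into the stated form
  have hfinal : Real.sqrt ((((d : ℝ) - 1) / d) * (S / ((d : ℝ) + 1) - 1 / d)) =
      Real.sqrt ((d : ℝ) - 1) * Real.sqrt ((d : ℝ) * (S / ((d : ℝ) + 1)) - 1) / d := by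
    have harg : (((d : ℝ) - 1) / d) * (S / ((d : ℝ) + 1) - 1 / d) =
        (((d : ℝ) - 1) * ((d : ℝ) * (S / ((d : ℝ) + 1)) - 1)) / d ^ 2 := by
      field_simp
    rw [harg, Real.sqrt_div (mul_nonneg (by linarith) hA), Real.sqrt_sq (le_of_lt hd0),
      Real.sqrt_mul (by linarith)]
  rw [hfinal] at hmain
  have hrw : (1 + Real.sqrt ((d : ℝ) - 1) * Real.sqrt ((d : ℝ) * (S / ((d : ℝ) + 1)) - 1)) / d =
      1 / d + Real.sqrt ((d : ℝ) - 1) * Real.sqrt ((d : ℝ) * (S / ((d : ℝ) + 1)) - 1) / d := by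
    ring
  rw [hrw]
  exact hmain
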